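/- If F(A_1), ..., F(A_N) are affine sets of free states, Δ^{(a)} are conditional RD channels for each F(A_a) (of the measure-and-prepare form Δ^{(a)} = Σ_m ⟨m|·|m⟩ ⊗ Δ^{(a)}_m with each Δ^{(a)}_m mapping all states into F(A_a)), and the composite free set is F(A_1…A_N) = Aff(F(A_1)⊗…⊗F(A_N)) ∩ D(A_1…A_N), then for every joint state ρ ∈ D(M_1 A_1 … M_N A_N), (Δ^{(1)} ⊗ … ⊗ Δ^{(N)})(ρ) ∈ F(B_1…B_N). (Unbreakability of censorship for affine QRTs.) -/

import Mathlib

open Matrix BigOperators ComplexOrder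

noncomputable section

def IsDensity {n : Type*} [Fintype n] [DecidableEq n] (ρ : Matrix n n ℂ) : Prop :=
  ρ.PosSemidef ∧ ρ.trace = 1

/-- Kronecker product of `N` local matrices, on the composite index `∀ a, I a`. -/
def prodMat {N : ℕ} {I : Fin N → Type*} (ω : ∀ a, Matrix (I a) (I a) ℂ) :
    Matrix (∀ a, I a) (∀ a, I a) ℂ :=
  Matrix.of fun s t => ∏ a, ω a (s a) (t a)

/-- The tensor product `L_1 ⊗ ⋯ ⊗ L_N` of linear maps on matrix spaces, applied to a
joint matrix (defined via the expansion in matrix units). -/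
def tensorApply {N : ℕ} {I O : Fin N → Type*}
    [∀ a, Fintype (I a)] [∀ a, DecidableEq (I a)]
    (L : ∀ a, Matrix (I a) (I a) ℂ →ₗ[ℂ] Matrix (O a) (O a) ℂ)
    (X : Matrix (∀ a, I a) (∀ a, I a) ℂ) : Matrix (∀ a, O a) (∀ a, O a) ℂ :=
  Matrix.of fun s' t' => ∑ s, ∑ t, X s t *
    ∏ a, (L a (Matrix.single (s a) (t a) 1)) (s' a) (t' a)

/-- The conditional channel `Δ = Σ_m ⟨m|·|m⟩ ⊗ Δ_m`, tensored over the `N` parties: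
a projective measurement of all description registers followed by the conditioned
local channels. -/
def condTensor {N : ℕ} {dM dA : Fin N → ℕ}
    (L : ∀ a, Fin (dM a) →
      (Matrix (Fin (dA a)) (Fin (dA a)) ℂ →ₗ[ℂ] Matrix (Fin (dA a)) (Fin (dA a)) ℂ))
    (ρ : Matrix ((∀ a, Fin (dM a)) × (∀ a, Fin (dA a)))
      ((∀ a, Fin (dM a)) × (∀ a, Fin (dA a))) ℂ) :
    Matrix (∀ a, Fin (dA a)) (∀ a, Fin (dA a)) ℂ :=
  ∑ m : ∀ a, Fin (dM a),
    tensorApply (fun a => L a (m a)) (Matrix.of fun s t => ρ (m, s) (m, t))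

/-- Choi matrix of a linear map on matrices; positive semidefiniteness of the Choi
matrix is equivalent to complete positivity. -/
def choi {n m : Type*} [Fintype n] [DecidableEq n]
    (L : Matrix n n ℂ →ₗ[ℂ] Matrix m m ℂ) : Matrix (n × m) (n × m) ℂ :=
  Matrix.of fun p q => (L (Matrix.single p.1 q.1 1)) p.2 q.2


/-! ### Auxiliary lemmas -/

lemma sum_rot {α β γ M : Type*} [Fintype α] [Fintype β] [Fintype γ] [AddCommMonoid M]
    (f : α → β → γ → M) :
    (∑ a, ∑ b, ∑ c, f a b c) = ∑ c, ∑ a, ∑ b, f a b c :=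
  (Finset.sum_congr rfl fun _ _ => Finset.sum_comm).trans Finset.sum_comm

def rankOne {n : Type*} (w : n → ℂ) : Matrix n n ℂ :=
  Matrix.of fun i j => w i * star (w j)

lemma rankOne_posSemidef {n : Type*} [Fintype n] (w : n → ℂ) :
    (rankOne w).PosSemidef := by
  have h : rankOne w =
      (Matrix.of fun (_ : Unit) j => star (w j))ᴴ * (Matrix.of fun (_ : Unit) j => star (w j)) := by
    ext i j
    simp [rankOne, Matrix.mul_apply, Matrix.conjTranspose_apply]
  rw [h]
  exact Matrix.posSemidef_conjTranspose_mul_self _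

lemma posSemidef_real_smul {n : Type*} [Fintype n] {M : Matrix n n ℂ}
    (hM : M.PosSemidef) {r : ℝ} (hr : 0 ≤ r) : (((r : ℂ)) • M).PosSemidef := by
  constructor
  · have := hM.1
    unfold Matrix.IsHermitian at *
    rw [Matrix.conjTranspose_smul, this, Complex.star_def, Complex.conj_ofReal]
  · exact (hM.smul (by exact_mod_cast Complex.zero_le_real.mpr hr) : (((r : ℂ)) • M).PosSemidef).2

lemma posSemidef_sum {n ι : Type*} [Fintype n] (s : Finset ι) (f : ι → Matrix n n ℂ)
    (h : ∀ i ∈ s, (f i).PosSemidef) : (∑ i ∈ s, f i).PosSemidef :=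
  Finset.sum_induction f _ (fun _ _ ha hb => ha.add hb) Matrix.PosSemidef.zero h

lemma real_smul_matrix {n m : Type*} (r : ℝ) (M : Matrix n m ℂ) :
    r • M = ((r : ℂ)) • M := by
  ext i j
  simp [Complex.real_smul]

lemma trace_prodMat {N : ℕ} {I : Fin N → Type*} [∀ a, Fintype (I a)]
    (ω : ∀ a, Matrix (I a) (I a) ℂ) :
    (prodMat ω).trace = ∏ a, (ω a).trace := by
  have h : ∀ a, (ω a).trace = ∑ x ∈ (Finset.univ : Finset (I a)), ω a x x := fun a => rfl
  calc (prodMat ω).trace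
      = ∑ s : ∀ a, I a, ∏ a, ω a (s a) (s a) := rfl
    _ = ∏ a, ∑ x, ω a x x := by
        rw [Finset.prod_univ_sum, Fintype.piFinset_univ]
    _ = ∏ a, (ω a).trace := by simp [h]

/-! ### Decomposition of matrix units into density matrices -/

def eVec {d : ℕ} (s : Fin d) : Fin d → ℂ := fun i => if i = s then 1 else 0

def dmat {d : ℕ} (s t : Fin d) : Fin 4 → Matrix (Fin d) (Fin d) ℂ :=
  if s = t then fun _ => rankOne (eVec s)
  else ![(2:ℂ)⁻¹ • rankOne (eVec s + eVec t),
        (2:ℂ)⁻¹ • rankOne (eVec s + Complex.I • eVec t),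
        rankOne (eVec s), rankOne (eVec t)]

def dcoef {d : ℕ} (s t : Fin d) : Fin 4 → ℂ :=
  if s = t then ![1, 0, 0, 0] else ![1, Complex.I, -(1 + Complex.I)/2, -(1 + Complex.I)/2]

lemma trace_rankOne {d : ℕ} (w : Fin d → ℂ) :
    (rankOne w).trace = ∑ i, w i * star (w i) := rfl

lemma rankOne_eVec_density {d : ℕ} (s : Fin d) : IsDensity (rankOne (eVec s)) := by
  refine ⟨rankOne_posSemidef _, ?_⟩
  rw [trace_rankOne]
  have h : ∀ i, eVec s i * star (eVec s i) = if i = s then 1 else 0 := by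
    intro i
    by_cases h : i = s <;> simp [eVec, h]
  simp only [h]
  simp

set_option linter.unnecessarySeqFocus false in
lemma dmat_density {d : ℕ} (s t : Fin d) (j : Fin 4) : IsDensity (dmat s t j) := by
  by_cases hst : s = t
  · simpa [dmat, hst] using rankOne_eVec_density t
  have h2 : ((2:ℂ)⁻¹) = (((2:ℝ)⁻¹ : ℝ) : ℂ) := by norm_num
  fin_cases j
  · refine ⟨?_, ?_⟩
    · simp only [dmat, hst, if_false]
      show ((2:ℂ)⁻¹ • rankOne (eVec s + eVec t)).PosSemidef
      rw [h2]
      exact posSemidef_real_smul (rankOne_posSemidef _) (by norm_num)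
    · have h : ∀ i, (eVec s + eVec t) i * star ((eVec s + eVec t) i)
          = (if i = s then 1 else 0) + (if i = t then 1 else 0) := by
        intro i
        by_cases h1 : i = s <;> by_cases h2 : i = t <;>
          simp [eVec, h1, h2] <;> simp_all
      simp only [dmat, hst, if_false]
      show ((2:ℂ)⁻¹ • rankOne (eVec s + eVec t)).trace = 1
      rw [Matrix.trace_smul, trace_rankOne]
      simp only [h]
      rw [Finset.sum_add_distrib]
      simp [hst]
      norm_num
  · refine ⟨?_, ?_⟩
    · simp only [dmat, hst, if_false]
      show ((2:ℂ)⁻¹ • rankOne (eVec s + Complex.I • eVec t)).PosSemidef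
      rw [h2]
      exact posSemidef_real_smul (rankOne_posSemidef _) (by norm_num)
    · have h : ∀ i, (eVec s + Complex.I • eVec t) i * star ((eVec s + Complex.I • eVec t) i)
          = (if i = s then 1 else 0) + (if i = t then 1 else 0) := by
        intro i
        by_cases h1 : i = s <;> by_cases h2 : i = t <;>
          simp [eVec, h1, h2, Complex.star_def] <;> simp_all
      simp only [dmat, hst, if_false]
      show ((2:ℂ)⁻¹ • rankOne (eVec s + Complex.I • eVec t)).trace = 1
      rw [Matrix.trace_smul, trace_rankOne]
      simp only [h]
      rw [Finset.sum_add_distrib]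
      simp [hst]
      norm_num
  · simpa [dmat, hst] using rankOne_eVec_density s
  · simpa [dmat, hst] using rankOne_eVec_density t

set_option linter.unnecessarySeqFocus false in
lemma std_decomp {d : ℕ} (s t : Fin d) :
    Matrix.single s t 1 = ∑ j : Fin 4, dcoef s t j • dmat s t j := by
  by_cases hst : s = t
  · subst hst
    simp only [dcoef, dmat, if_true, Fin.sum_univ_four]
    ext i j
    simp only [Matrix.single, Matrix.of_apply, Matrix.add_apply, Matrix.smul_apply,
      rankOne, eVec, smul_eq_mul]
    by_cases h1 : i = s <;> by_cases h2 : j = s <;> simp [h1, h2] <;> simp_all [eq_comm]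
  · simp only [dcoef, dmat, hst, if_false, Fin.sum_univ_four]
    ext i j
    simp only [Matrix.single, Matrix.of_apply, Matrix.add_apply, Matrix.smul_apply,
      rankOne, eVec, Pi.add_apply, Pi.smul_apply, smul_eq_mul,
      Matrix.cons_val_zero, Matrix.cons_val_one, Matrix.head_cons]
    by_cases h1 : i = s <;> by_cases h2 : i = t <;> by_cases h3 : j = s <;> by_cases h4 : j = t <;>
      simp_all [Complex.star_def, eq_comm] <;> ring_nf <;> simp [Complex.I_sq] <;> ring_nf

/-! ### Complete positivity and trace preservation of the tensorized map -/

set_option maxHeartbeats 1000000 in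
lemma tensorApply_posSemidef {N : ℕ} {I : Fin N → Type*}
    [∀ a, Fintype (I a)] [∀ a, DecidableEq (I a)]
    (L : ∀ a, Matrix (I a) (I a) ℂ →ₗ[ℂ] Matrix (I a) (I a) ℂ)
    (hCP : ∀ a, (choi (L a)).PosSemidef)
    {X : Matrix (∀ a, I a) (∀ a, I a) ℂ} (hX : X.PosSemidef) :
    (tensorApply L X).PosSemidef := by
  have hD := fun a => (show ∃ B : Matrix (I a × I a) (I a × I a) ℂ, choi (L a) = Bᴴ * B by
    open scoped MatrixOrder in
    exact ⟨CFC.sqrt (choi (L a)), by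
      rw [← Matrix.star_eq_conjTranspose, (CFC.sqrt_nonneg (choi (L a))).isSelfAdjoint.star_eq,
        CFC.sqrt_mul_sqrt_self (choi (L a)) (Matrix.nonneg_iff_posSemidef.mpr (hCP a))]⟩)
  choose D hD using hD
  set K : ∀ a, (I a × I a) → Matrix (I a) (I a) ℂ :=
    fun a i => Matrix.of fun s' s => star (D a i (s, s')) with hK
  have keyA : ∀ a (s t : I a), L a (Matrix.single s t 1)
      = Matrix.of fun s' t' => ∑ i, K a i s' s * star (K a i t' t) := by
    intro a s t
    ext s' t'
    have h1 : (L a (Matrix.single s t 1)) s' t' = choi (L a) (s, s') (t, t') := rfl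
    rw [h1, hD a]
    simp [Matrix.mul_apply, Matrix.conjTranspose_apply, hK]
  have main : tensorApply L X = ∑ g : ∀ a, I a × I a,
      (prodMat fun a => K a (g a)) * X * (prodMat fun a => K a (g a))ᴴ := by
    ext s' t'
    have hL : ∀ (s t : ∀ a, I a), (∏ a, (L a (Matrix.single (s a) (t a) 1)) (s' a) (t' a))
        = ∑ g : ∀ a, I a × I a, ∏ a, (K a (g a) (s' a) (s a) * star (K a (g a) (t' a) (t a))) := by
      intro s t
      calc (∏ a, (L a (Matrix.single (s a) (t a) 1)) (s' a) (t' a))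
          = ∏ a, ∑ i, (K a i (s' a) (s a) * star (K a i (t' a) (t a))) := by
            refine Finset.prod_congr rfl fun a _ => ?_
            rw [keyA a (s a) (t a)]
            rfl
        _ = _ := by rw [Finset.prod_univ_sum, Fintype.piFinset_univ]
    show (∑ s, ∑ t, X s t * ∏ a, (L a (Matrix.single (s a) (t a) 1)) (s' a) (t' a)) = _
    simp only [hL, Finset.mul_sum]
    conv_rhs => simp only [Matrix.sum_apply, Matrix.mul_apply, Matrix.conjTranspose_apply,
      prodMat, Matrix.of_apply, Finset.sum_mul]
    conv_rhs => enter [2, g]; rw [Finset.sum_comm]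
    conv_rhs => rw [Finset.sum_comm]
    conv_rhs => enter [2, k]; rw [Finset.sum_comm]
    refine Finset.sum_congr rfl fun s _ => Finset.sum_congr rfl fun t _ =>
      Finset.sum_congr rfl fun g _ => ?_
    rw [Finset.prod_mul_distrib, ← star_prod]
    ring
  rw [main]
  exact posSemidef_sum _ _ fun g _ => hX.mul_mul_conjTranspose_same _

lemma trace_stdBasis {n : Type*} [Fintype n] [DecidableEq n] (s t : n) :
    (Matrix.single s t (1:ℂ)).trace = if s = t then 1 else 0 := by
  unfold Matrix.trace Matrix.diag Matrix.single
  simp only [Matrix.of_apply]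
  by_cases h : s = t
  · subst h; simp
  · rw [if_neg h]
    apply Finset.sum_eq_zero
    intro i _
    rw [if_neg]
    rintro ⟨rfl, rfl⟩
    exact h rfl

lemma tensorApply_trace {N : ℕ} {I : Fin N → Type*}
    [∀ a, Fintype (I a)] [∀ a, DecidableEq (I a)]
    (L : ∀ a, Matrix (I a) (I a) ℂ →ₗ[ℂ] Matrix (I a) (I a) ℂ)
    (hTP : ∀ a X, (L a X).trace = X.trace)
    (X : Matrix (∀ a, I a) (∀ a, I a) ℂ) :
    (tensorApply L X).trace = X.trace := by
  have step : ∀ s t : ∀ a, I a,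
      (∑ s' : ∀ a, I a, ∏ a, (L a (Matrix.single (s a) (t a) 1)) (s' a) (s' a))
        = if s = t then 1 else 0 := by
    intro s t
    have hps := Finset.prod_univ_sum (fun a : Fin N => (Finset.univ : Finset (I a)))
      (fun a v => (L a (Matrix.single (s a) (t a) 1)) v v)
    rw [Fintype.piFinset_univ] at hps
    rw [← hps]
    have h : ∀ a, (∑ x, (L a (Matrix.single (s a) (t a) 1)) x x)
        = if s a = t a then 1 else 0 := by
      intro a
      have := hTP a (Matrix.single (s a) (t a) 1)
      rw [trace_stdBasis] at this
      exact this
    rw [Finset.prod_congr rfl fun a _ => h a, Finset.prod_boole]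
    congr 1
    simp [funext_iff]
  calc (tensorApply L X).trace
      = ∑ s' : ∀ a, I a, ∑ s, ∑ t, X s t *
          ∏ a, (L a (Matrix.single (s a) (t a) 1)) (s' a) (s' a) := rfl
    _ = ∑ s, ∑ t, X s t * ∑ s' : ∀ a, I a,
          ∏ a, (L a (Matrix.single (s a) (t a) 1)) (s' a) (s' a) := by
        rw [Finset.sum_comm]
        refine Finset.sum_congr rfl fun s _ => ?_
        rw [Finset.sum_comm]
        refine Finset.sum_congr rfl fun t _ => ?_
        rw [Finset.mul_sum]
    _ = ∑ s, ∑ t, X s t * if s = t then 1 else 0 := by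
        refine Finset.sum_congr rfl fun s _ => Finset.sum_congr rfl fun t _ => ?_
        rw [step]
    _ = X.trace := by
        simp [Matrix.trace, Matrix.diag, Finset.sum_ite_eq']

/-- unbreakability of censorship for affine QRTs: if each local free set
`F a` consists of states and is affine, and each conditioned local channel `L a m` is a
channel (CP and trace preserving) mapping every state into `F a`, then the output of the
censorship `Δ^{⊗N}` on any joint state lies in
`F(B_1…B_N) = Aff(F(B_1)⊗…⊗F(B_N)) ∩ D(B_1…B_N)`. -/
theorem censorship_unbreakable_affine {N : ℕ} {dM dA : Fin N → ℕ}
    (F : ∀ a, Set (Matrix (Fin (dA a)) (Fin (dA a)) ℂ))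
    (hFD : ∀ a, ∀ σ ∈ F a, IsDensity σ)
    (haff : ∀ a, ∀ (k : ℕ) (t : Fin k → ℝ) (σ : Fin k → Matrix (Fin (dA a)) (Fin (dA a)) ℂ),
      (∀ b, σ b ∈ F a) → (∑ b, t b = 1) → IsDensity (∑ b, t b • σ b) →
      (∑ b, t b • σ b) ∈ F a)
    (L : ∀ a, Fin (dM a) →
      (Matrix (Fin (dA a)) (Fin (dA a)) ℂ →ₗ[ℂ] Matrix (Fin (dA a)) (Fin (dA a)) ℂ))
    (hCP : ∀ a m, (choi (L a m)).PosSemidef)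
    (hTP : ∀ a m X, (L a m X).trace = X.trace)
    (hRD : ∀ a m ρ, IsDensity ρ → L a m ρ ∈ F a)
    (ρ : Matrix ((∀ a, Fin (dM a)) × (∀ a, Fin (dA a)))
      ((∀ a, Fin (dM a)) × (∀ a, Fin (dA a))) ℂ)
    (hρ : IsDensity ρ) :
    IsDensity (condTensor L ρ) ∧
    ∃ (k : ℕ) (t : Fin k → ℝ) (ω : Fin k → ∀ a, Matrix (Fin (dA a)) (Fin (dA a)) ℂ),
      (∑ b, t b = 1) ∧ (∀ b a, ω b a ∈ F a) ∧
      condTensor L ρ = ∑ b, t b • prodMat (ω b) := by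
  classical
  have hsub : ∀ m : ∀ a, Fin (dM a),
      (Matrix.of fun s t => ρ (m, s) (m, t)).PosSemidef := by
    intro m
    exact hρ.1.submatrix fun s => (m, s)
  have hPSD : (condTensor L ρ).PosSemidef := by
    unfold condTensor
    exact posSemidef_sum _ _ fun m _ =>
      tensorApply_posSemidef _ (fun a => hCP a (m a)) (hsub m)
  have hρtr : ρ.trace = ∑ m : ∀ a, Fin (dM a), ∑ s, ρ (m, s) (m, s) := by
    rw [show ρ.trace = ∑ p : (∀ a, Fin (dM a)) × (∀ a, Fin (dA a)), ρ p p from rfl]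
    rw [Fintype.sum_prod_type]
  have hTr : (condTensor L ρ).trace = 1 := by
    unfold condTensor
    rw [Matrix.trace_sum]
    calc ∑ m, (tensorApply (fun a => L a (m a)) (Matrix.of fun s t => ρ (m, s) (m, t))).trace
        = ∑ m : ∀ a, Fin (dM a), (Matrix.of fun s t => ρ (m, s) (m, t)).trace := by
          refine Finset.sum_congr rfl fun m _ => ?_
          exact tensorApply_trace _ (fun a => hTP a (m a)) _
      _ = ∑ m : ∀ a, Fin (dM a), ∑ s, ρ (m, s) (m, s) := rfl
      _ = ρ.trace := hρtr.symm
      _ = 1 := hρ.2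
  refine ⟨⟨hPSD, hTr⟩, ?_⟩
  -- the affine decomposition
  set D0 : ((∀ a, Fin (dM a)) × (∀ a, Fin (dA a)) × (∀ a, Fin (dA a)) × (∀ a, Fin 4)) → ℂ :=
    fun x => ρ (x.1, x.2.1) (x.1, x.2.2.1) *
      ∏ a, dcoef (x.2.1 a) (x.2.2.1 a) (x.2.2.2 a) with hD0
  set Ω : ((∀ a, Fin (dM a)) × (∀ a, Fin (dA a)) × (∀ a, Fin (dA a)) × (∀ a, Fin 4)) →
      ∀ a, Matrix (Fin (dA a)) (Fin (dA a)) ℂ :=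
    fun x a => L a (x.1 a) (dmat (x.2.1 a) (x.2.2.1 a) (x.2.2.2 a)) with hΩdef
  have hΩF : ∀ x a, Ω x a ∈ F a := fun x a => hRD a _ _ (dmat_density _ _ _)
  have hΩH : ∀ x a, (Ω x a)ᴴ = Ω x a := fun x a => ((hFD a _ (hΩF x a)).1).1
  have hΩtr : ∀ x a, (Ω x a).trace = 1 := fun x a => (hFD a _ (hΩF x a)).2
  have hPH : ∀ x, (prodMat (Ω x))ᴴ = prodMat (Ω x) := by
    intro x
    ext i j
    simp only [Matrix.conjTranspose_apply, prodMat, Matrix.of_apply, star_prod]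
    refine Finset.prod_congr rfl fun a _ => ?_
    calc star (Ω x a (j a) (i a)) = (Ω x a)ᴴ (i a) (j a) := rfl
      _ = Ω x a (i a) (j a) := by rw [hΩH x a]
  have claim1 : condTensor L ρ = ∑ x, D0 x • prodMat (Ω x) := by
    ext s' t'
    have hPexp : ∀ (m : ∀ a, Fin (dM a)) (s t : ∀ a, Fin (dA a)),
        (∏ a, (L a (m a) (Matrix.single (s a) (t a) 1)) (s' a) (t' a))
          = ∑ g : ∀ a, Fin 4, ∏ a, (dcoef (s a) (t a) (g a) *
              (L a (m a) (dmat (s a) (t a) (g a))) (s' a) (t' a)) := by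
      intro m s t
      calc (∏ a, (L a (m a) (Matrix.single (s a) (t a) 1)) (s' a) (t' a))
          = ∏ a, ∑ j : Fin 4, dcoef (s a) (t a) j *
              (L a (m a) (dmat (s a) (t a) j)) (s' a) (t' a) := by
            refine Finset.prod_congr rfl fun a _ => ?_
            rw [std_decomp (s a) (t a), map_sum]
            simp only [_root_.map_smul, Matrix.sum_apply, Matrix.smul_apply, smul_eq_mul]
        _ = _ := by rw [Finset.prod_univ_sum, Fintype.piFinset_univ]
    show (∑ m, tensorApply (fun a => L a (m a)) (Matrix.of fun s t => ρ (m, s) (m, t))) s' t' = _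
    simp only [Matrix.sum_apply, tensorApply, Matrix.of_apply, Matrix.smul_apply, prodMat,
      smul_eq_mul]
    simp only [hPexp, Finset.mul_sum]
    conv_rhs => rw [Fintype.sum_prod_type]
    conv_rhs => enter [2, m]; rw [Fintype.sum_prod_type]
    conv_rhs => enter [2, m, 2, s]; rw [Fintype.sum_prod_type]
    refine Finset.sum_congr rfl fun m _ => Finset.sum_congr rfl fun s _ =>
      Finset.sum_congr rfl fun t _ => Finset.sum_congr rfl fun g _ => ?_
    rw [Finset.prod_mul_distrib]
    ring
  have hH : (condTensor L ρ)ᴴ = condTensor L ρ := hPSD.1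
  have claim1' : condTensor L ρ = ∑ x, (starRingEnd ℂ) (D0 x) • prodMat (Ω x) := by
    conv_lhs => rw [← hH, claim1]
    rw [Matrix.conjTranspose_sum]
    refine Finset.sum_congr rfl fun x _ => ?_
    rw [Matrix.conjTranspose_smul, hPH]
    rfl
  have claim2 : condTensor L ρ = ∑ x, ((D0 x).re : ℝ) • prodMat (Ω x) := by
    have hx : ∀ x, ((D0 x).re : ℝ) • prodMat (Ω x)
        = (2:ℂ)⁻¹ • (D0 x • prodMat (Ω x) + (starRingEnd ℂ) (D0 x) • prodMat (Ω x)) := by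
      intro x
      rw [real_smul_matrix, ← add_smul, smul_smul]
      congr 1
      have h := Complex.add_conj (D0 x)
      rw [h]
      push_cast
      ring
    rw [Finset.sum_congr rfl fun x _ => hx x, ← Finset.smul_sum, Finset.sum_add_distrib,
      ← claim1, ← claim1']
    rw [← two_smul ℂ (condTensor L ρ), smul_smul]
    norm_num
  set e : Fin (Fintype.card ((∀ a, Fin (dM a)) × (∀ a, Fin (dA a)) × (∀ a, Fin (dA a)) × (Fin N → Fin 4)))
      ≃ ((∀ a, Fin (dM a)) × (∀ a, Fin (dA a)) × (∀ a, Fin (dA a)) × (Fin N → Fin 4)) :=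
    (Fintype.equivFin _).symm with he
  have heq : condTensor L ρ = ∑ b, ((D0 (e b)).re : ℝ) • prodMat (Ω (e b)) := by
    rw [claim2]
    exact (Equiv.sum_comp e fun x => ((D0 x).re : ℝ) • prodMat (Ω x)).symm
  have hsum : (∑ b, (D0 (e b)).re) = 1 := by
    have h1 : (condTensor L ρ).trace = ∑ b, ((D0 (e b)).re : ℂ) := by
      rw [heq, Matrix.trace_sum]
      refine Finset.sum_congr rfl fun b _ => ?_
      rw [Matrix.trace_smul, trace_prodMat]
      rw [Finset.prod_congr rfl fun a _ => hΩtr (e b) a]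
      simp [Complex.real_smul]
    rw [hTr] at h1
    have : ((∑ b, (D0 (e b)).re : ℝ) : ℂ) = 1 := by
      push_cast
      exact h1.symm
    exact_mod_cast this
  exact ⟨Fintype.card ((∀ a, Fin (dM a)) × (∀ a, Fin (dA a)) × (∀ a, Fin (dA a)) × (Fin N → Fin 4)),
    fun b => (D0 (e b)).re, fun b => Ω (e b), hsum, fun b a => hΩF (e b) a, heq⟩
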